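/- Let f : ℝ^N → ℝ be continuously differentiable and M ⊆ ℝ^N closed. Suppose a sequence (x_n) ⊆ M satisfies: (A1) f(x_{n+1}) − f(x_n) ≤ −σ g⁻(x_n) ‖x_{n+1} − x_n‖ for some σ > 0 and all n; and (A2) g⁻(x_n) = 0 implies x_{n+1} = x_n. Suppose x* is a cluster point of (x_n) at which the Łojasiewicz inequality for the projected antigradient holds: there are δ, Λ > 0 and θ ∈ (0, 1/2] with |f(y) − f(x*)|^{1−θ} ≤ Λ g⁻(y) for all y ∈ M with ‖y − x*‖ < δ. Then x_n → x*. -/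

import Mathlib

open scoped RealInnerProductSpace

/-- Sequential tangent cone of `M ⊆ ℝ^N` at `x`. -/
def seqTangentCone {N : ℕ} (M : Set (EuclideanSpace ℝ (Fin N)))
    (x : EuclideanSpace ℝ (Fin N)) : Set (EuclideanSpace ℝ (Fin N)) :=
  {ξ | ∃ (X : ℕ → EuclideanSpace ℝ (Fin N)) (a : ℕ → ℝ),
      (∀ i, X i ∈ M) ∧ (∀ i, 0 < a i) ∧
      Filter.Tendsto X Filter.atTop (nhds x) ∧
      Filter.Tendsto (fun i => a i • (X i - x)) Filter.atTop (nhds ξ)}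

/-- `g⁻(y)`: the norm of the projection of the antigradient `−∇f(y)` onto the tangent
cone of `M` at `y`, characterized as `max{ −∇f(y)ᵀξ : ξ ∈ T_y M, ‖ξ‖ ≤ 1 }`. -/
noncomputable def gNeg {N : ℕ} (f : EuclideanSpace ℝ (Fin N) → ℝ)
    (M : Set (EuclideanSpace ℝ (Fin N))) (y : EuclideanSpace ℝ (Fin N)) : ℝ :=
  sSup ((fun ξ => ⟪-(gradient f y), ξ⟫) '' {ξ | ξ ∈ seqTangentCone M y ∧ ‖ξ‖ ≤ 1})

open Filter

lemma gNeg_nonneg {N : ℕ} (f : EuclideanSpace ℝ (Fin N) → ℝ)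
    (M : Set (EuclideanSpace ℝ (Fin N))) {y : EuclideanSpace ℝ (Fin N)} (hy : y ∈ M) :
    0 ≤ gNeg f M y := by
  have hbdd : BddAbove ((fun ξ => ⟪-(gradient f y), ξ⟫) ''
      {ξ | ξ ∈ seqTangentCone M y ∧ ‖ξ‖ ≤ 1}) := by
    refine ⟨‖gradient f y‖, ?_⟩
    rintro r ⟨ξ, ⟨-, hξ⟩, rfl⟩
    calc ⟪-(gradient f y), ξ⟫ ≤ ‖-(gradient f y)‖ * ‖ξ‖ := real_inner_le_norm _ _
      _ ≤ ‖gradient f y‖ * 1 := by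
          rw [norm_neg]; exact mul_le_mul_of_nonneg_left hξ (norm_nonneg _)
      _ = ‖gradient f y‖ := mul_one _
  have hmem : (0 : ℝ) ∈ ((fun ξ => ⟪-(gradient f y), ξ⟫) ''
      {ξ | ξ ∈ seqTangentCone M y ∧ ‖ξ‖ ≤ 1}) := by
    refine ⟨0, ⟨⟨fun _ => y, fun _ => 1, fun _ => hy, fun _ => one_pos,
      tendsto_const_nhds, by simp⟩, by simp⟩, by simp⟩
  exact le_csSup hbdd hmem

/-- Abstract convergence theorem. If `(x_n) ⊆ M` satisfies the primary
descent condition (A1) and the stationary condition (A2), and `x*` is a cluster point at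
which the Łojasiewicz inequality for the projected antigradient holds, then `x_n → x*`. -/
theorem stmt_14 {N : ℕ} (f : EuclideanSpace ℝ (Fin N) → ℝ)
    (hf : ContDiff ℝ 1 f) (hbdd : ∃ b : ℝ, ∀ y, b ≤ f y)
    (M : Set (EuclideanSpace ℝ (Fin N))) (hM : IsClosed M)
    (x : ℕ → EuclideanSpace ℝ (Fin N)) (hxM : ∀ i, x i ∈ M)
    (σ : ℝ) (hσ : 0 < σ)
    (hA1 : ∀ i, f (x (i+1)) - f (x i) ≤ -σ * gNeg f M (x i) * ‖x (i+1) - x i‖)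
    (hA2 : ∀ i, gNeg f M (x i) = 0 → x (i+1) = x i)
    (xstar : EuclideanSpace ℝ (Fin N))
    (hcluster : MapClusterPt xstar Filter.atTop x)
    (δ Λ θ : ℝ) (hδ : 0 < δ) (hΛ : 0 < Λ) (hθ : θ ∈ Set.Ioc (0 : ℝ) (1/2))
    (hLoj : ∀ y ∈ M, ‖y - xstar‖ < δ →
      |f y - f xstar| ^ (1 - θ) ≤ Λ * gNeg f M y) :
    Filter.Tendsto x Filter.atTop (nhds xstar) := by
  obtain ⟨θpos, θle⟩ := hθ
  have hθ1 : θ < 1 := lt_of_le_of_lt θle (by norm_num)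
  have hg : ∀ i, 0 ≤ gNeg f M (x i) := fun i => gNeg_nonneg f M (hxM i)
  have hstep : ∀ i, f (x (i+1)) ≤ f (x i) := by
    intro i
    have h := hA1 i
    nlinarith [mul_nonneg (mul_nonneg hσ.le (hg i)) (norm_nonneg (x (i+1) - x i))]
  have hanti : Antitone (fun i => f (x i)) := antitone_nat_of_succ_le hstep
  obtain ⟨b, hb⟩ := hbdd
  have hbdd' : BddBelow (Set.range fun i => f (x i)) := ⟨b, by rintro r ⟨i, rfl⟩; exact hb _⟩
  have hlim : Tendsto (fun i => f (x i)) atTop (nhds (⨅ i, f (x i))) :=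
    tendsto_atTop_ciInf hanti hbdd'
  have hfc : Continuous f := hf.continuous
  have hcl2 : MapClusterPt (f xstar) atTop (fun i => f (x i)) :=
    hcluster.continuousAt_comp hfc.continuousAt
  have hfx : f xstar = ⨅ i, f (x i) := by
    exact eq_of_nhds_neBot (Filter.neBot_of_le (hf := hcl2) (inf_le_inf_left _ hlim))
  have hge : ∀ i, f xstar ≤ f (x i) := by
    intro i; rw [hfx]; exact ciInf_le hbdd' i
  have hflim : Tendsto (fun i => f (x i)) atTop (nhds (f xstar)) := hfx ▸ hlim
  set H : ℕ → ℝ := fun i => (f (x i) - f xstar) ^ θ with hH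
  have hH0 : ∀ i, 0 ≤ H i := fun i => Real.rpow_nonneg (sub_nonneg.2 (hge i)) θ
  have hHanti : Antitone H := fun i j hij =>
    Real.rpow_le_rpow (sub_nonneg.2 (hge j)) (sub_le_sub_right (hanti hij) _) θpos.le
  have hHlim : Tendsto H atTop (nhds 0) := by
    have h1 : Tendsto (fun i => f (x i) - f xstar) atTop (nhds 0) := by
      simpa using hflim.sub_const (f xstar)
    have h2 : ContinuousAt (fun t : ℝ => t ^ θ) 0 :=
      Real.continuousAt_rpow_const 0 θ (Or.inr θpos.le)
    have := h2.tendsto.comp h1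
    simpa [Real.zero_rpow θpos.ne', Function.comp_def, hH] using this
  have hCpos : (0:ℝ) < Λ / (σ * θ) := by positivity
  -- key per-step estimate
  have key : ∀ n, ‖x n - xstar‖ < δ →
      ‖x (n+1) - x n‖ ≤ Λ / (σ * θ) * (H n - H (n+1)) := by
    intro n hball
    by_cases h0 : gNeg f M (x n) = 0
    · rw [hA2 n h0]
      simp [hH, hA2 n h0]
    · have hgpos : 0 < gNeg f M (x n) := lt_of_le_of_ne (hg n) (Ne.symm h0)
      have ha : 0 ≤ f (x n) - f xstar := sub_nonneg.2 (hge n)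
      have hbb : 0 ≤ f (x (n+1)) - f xstar := sub_nonneg.2 (hge (n+1))
      have hba : f (x (n+1)) - f xstar ≤ f (x n) - f xstar := sub_le_sub_right (hstep n) _
      have hA1' : σ * (gNeg f M (x n) * ‖x (n+1) - x n‖) ≤
          (f (x n) - f xstar) - (f (x (n+1)) - f xstar) := by
        have := hA1 n; nlinarith []
      rcases eq_or_lt_of_le ha with haz | hapos
      · have hbb0 : f (x (n+1)) - f xstar = 0 := le_antisymm (by linarith) hbb
        have hn0 : ‖x (n+1) - x n‖ = 0 := by
          by_contra hne
          have hpos : 0 < ‖x (n+1) - x n‖ := lt_of_le_of_ne (norm_nonneg _) (Ne.symm hne)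
          have := mul_pos hσ (mul_pos hgpos hpos)
          linarith
        rw [hn0]
        simp only [hH, ← haz, hbb0, Real.zero_rpow θpos.ne']
        simp
      · have hKL : (f (x n) - f xstar) ^ (1 - θ) ≤ Λ * gNeg f M (x n) := by
          have := hLoj (x n) (hxM n) hball
          rwa [abs_of_nonneg ha] at this
        have hAM : (f (x n) - f xstar) ^ (1 - θ) * (f (x (n+1)) - f xstar) ^ θ ≤
            (1 - θ) * (f (x n) - f xstar) + θ * (f (x (n+1)) - f xstar) :=
          Real.geom_mean_le_arith_mean2_weighted (by linarith) θpos.le ha hbb (by ring)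
        have hsum : (f (x n) - f xstar) ^ (1 - θ) * (f (x n) - f xstar) ^ θ
            = f (x n) - f xstar := by
          rw [← Real.rpow_add hapos]; simp
        have hs : 0 ≤ (f (x n) - f xstar) ^ θ - (f (x (n+1)) - f xstar) ^ θ :=
          sub_nonneg.2 (Real.rpow_le_rpow hbb hba θpos.le)
        have h1 : θ * ((f (x n) - f xstar) - (f (x (n+1)) - f xstar)) ≤
            (f (x n) - f xstar) ^ (1 - θ) *
              ((f (x n) - f xstar) ^ θ - (f (x (n+1)) - f xstar) ^ θ) := by
          nlinarith [hAM, hsum]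
        have h2 : (f (x n) - f xstar) ^ (1 - θ) *
              ((f (x n) - f xstar) ^ θ - (f (x (n+1)) - f xstar) ^ θ) ≤
            Λ * gNeg f M (x n) *
              ((f (x n) - f xstar) ^ θ - (f (x (n+1)) - f xstar) ^ θ) :=
          mul_le_mul_of_nonneg_right hKL hs
        have h3 : θ * (σ * (gNeg f M (x n) * ‖x (n+1) - x n‖)) ≤
            θ * ((f (x n) - f xstar) - (f (x (n+1)) - f xstar)) :=
          mul_le_mul_of_nonneg_left hA1' θpos.le
        have h4 : gNeg f M (x n) * (θ * σ * ‖x (n+1) - x n‖) ≤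
            gNeg f M (x n) * (Λ * ((f (x n) - f xstar) ^ θ - (f (x (n+1)) - f xstar) ^ θ)) := by
          nlinarith [h1, h2, h3]
        have h5 := le_of_mul_le_mul_left h4 hgpos
        simp only [hH]
        rw [div_mul_eq_mul_div, le_div_iff₀ (by positivity : (0:ℝ) < σ * θ)]
        nlinarith [h5]
  -- cluster point: frequently close
  have hfreq : ∀ ε > 0, ∃ᶠ n in atTop, ‖x n - xstar‖ < ε := by
    intro ε hε
    have := (mapClusterPt_iff_frequently.1 hcluster) (Metric.ball xstar ε) (Metric.ball_mem_nhds _ hε)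
    exact this.mono fun n hn => by rwa [Metric.mem_ball, dist_eq_norm] at hn
  have hev : ∀ᶠ n in atTop, Λ / (σ * θ) * H n < δ / 2 := by
    have hT : Tendsto (fun n => Λ / (σ * θ) * H n) atTop (nhds 0) := by
      simpa using hHlim.const_mul (Λ / (σ * θ))
    exact hT.eventually (eventually_lt_nhds (by positivity))
  obtain ⟨n0, hn0c, hn0H⟩ := ((hfreq (δ / 2) (by positivity)).and_eventually hev).exists
  have main : ∀ k, ‖x (n0 + k) - xstar‖ ≤
      ‖x n0 - xstar‖ + Λ / (σ * θ) * (H n0 - H (n0 + k)) := by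
    intro k
    induction k with
    | zero => simp
    | succ k ih =>
      have hball : ‖x (n0 + k) - xstar‖ < δ := by
        have h1 : Λ / (σ * θ) * (H n0 - H (n0 + k)) ≤ Λ / (σ * θ) * H n0 :=
          mul_le_mul_of_nonneg_left (by linarith [hH0 (n0 + k)]) hCpos.le
        calc ‖x (n0 + k) - xstar‖ ≤ _ := ih
          _ ≤ ‖x n0 - xstar‖ + Λ / (σ * θ) * H n0 := by linarith
          _ < δ / 2 + δ / 2 := by linarith
          _ = δ := by ring
      have hk := key (n0 + k) hball
      have hidx : n0 + (k + 1) = n0 + k + 1 := by omega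
      rw [hidx]
      have htri := dist_triangle (x (n0 + k + 1)) (x (n0 + k)) xstar
      rw [dist_eq_norm, dist_eq_norm, dist_eq_norm] at htri
      linarith
  have inball : ∀ j, n0 ≤ j → ‖x j - xstar‖ < δ := by
    intro j hj
    have h := main (j - n0)
    rw [Nat.add_sub_cancel' hj] at h
    have h1 : Λ / (σ * θ) * (H n0 - H j) ≤ Λ / (σ * θ) * H n0 :=
      mul_le_mul_of_nonneg_left (by linarith [hH0 j]) hCpos.le
    linarith
  have tele : ∀ n, n0 ≤ n → ∀ m, ‖x (n + m) - x n‖ ≤ Λ / (σ * θ) * (H n - H (n + m)) := by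
    intro n hn m
    induction m with
    | zero => simp
    | succ m ih =>
      have hb2 : ‖x (n + m) - xstar‖ < δ := inball (n + m) (le_trans hn (Nat.le_add_right _ _))
      have hk := key (n + m) hb2
      have hidx : n + (m + 1) = n + m + 1 := by omega
      rw [hidx]
      have htri := dist_triangle (x (n + m + 1)) (x (n + m)) (x n)
      rw [dist_eq_norm, dist_eq_norm, dist_eq_norm] at htri
      linarith
  have hfinal : ∀ n, n0 ≤ n → ‖x n - xstar‖ ≤ Λ / (σ * θ) * H n := by
    intro n hn
    refine le_of_forall_pos_le_add fun ε hε => ?_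
    obtain ⟨m, hm, hmc⟩ := (frequently_atTop.1 (hfreq ε hε)) n
    have h1 := tele n hn (m - n)
    rw [Nat.add_sub_cancel' hm] at h1
    have htri := dist_triangle (x n) (x m) xstar
    rw [dist_eq_norm, dist_eq_norm, dist_eq_norm] at htri
    have h2 : ‖x n - x m‖ = ‖x m - x n‖ := norm_sub_rev _ _
    have h3 : Λ / (σ * θ) * (H n - H m) ≤ Λ / (σ * θ) * H n :=
      mul_le_mul_of_nonneg_left (by linarith [hH0 m]) hCpos.le
    linarith
  have hnorm : Tendsto (fun n => ‖x n - xstar‖) atTop (nhds 0) := by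
    apply squeeze_zero' (Filter.Eventually.of_forall fun n => norm_nonneg _)
      (Filter.eventually_atTop.2 ⟨n0, hfinal⟩)
    simpa using hHlim.const_mul (Λ / (σ * θ))
  exact tendsto_iff_norm_sub_tendsto_zero.2 hnorm
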